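/- arXiv:1408.5358 — 2 statements merged into one kernel-verified Lean document; each statement's English description precedes it below -/
import Mathlib

section
/- Let $k$ be a field, $M$ a finitely generated abelian group, and $R$ a finitely generated $M$-graded $k$-algebra. For any homomorphism of finitely generated abelian groups $\varphi\colon M' \to M$, the pullback algebra $\varphi^* R := \bigoplus_{m' \in M'} R_{\varphi(m')}$, with multiplication $(m_1', r_1)\cdot(m_2',r_2) = (m_1'+m_2', r_1 r_2)$, is finitely generated as a $k$-algebra. -/
open scoped DirectSum

/-- Gordan-type lemma: the kernel of an additive monoid hom `(ι → ℕ) →+ N` into an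
abelian group is a finitely generated monoid. -/
theorem exists_finset_ker_gen {ι : Type*} [Fintype ι] {N : Type*} [AddCommGroup N]
    (δ : (ι → ℕ) →+ N) :
    ∃ T : Finset (ι → ℕ), (∀ a ∈ T, δ a = 0) ∧
      ∀ a : ι → ℕ, δ a = 0 → a ∈ AddSubmonoid.closure (T : Set (ι → ℕ)) := by
  classical
  set Min : Set (ι → ℕ) :=
    {a | δ a = 0 ∧ a ≠ 0 ∧ ∀ b : ι → ℕ, δ b = 0 → b ≠ 0 → b ≤ a → b = a} with hMin
  have hanti : IsAntichain (· ≤ ·) Min := fun a ha b hb hne hle => hne (hb.2.2 a ha.1 ha.2.1 hle)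
  have hfin : Min.Finite := hanti.finite_of_partiallyWellOrderedOn (Set.isPWO_of_wellQuasiOrderedLE Min)
  refine ⟨hfin.toFinset, fun a ha => (hfin.mem_toFinset.mp ha).1, ?_⟩
  have wf : WellFounded ((· < ·) : (ι → ℕ) → (ι → ℕ) → Prop) := by
    have h2 : WellFounded (InvImage ((· < ·) : ℕ → ℕ → Prop) fun b : ι → ℕ => ∑ i, b i) :=
      InvImage.wf _ Nat.lt_wfRel.wf
    refine Subrelation.wf (r := InvImage ((· < ·) : ℕ → ℕ → Prop) fun b : ι → ℕ => ∑ i, b i)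
      ?_ h2
    intro b c hbc
    obtain ⟨hble, i, hbi⟩ := Pi.lt_def.mp hbc
    exact Finset.sum_lt_sum (fun j _ => hble j) ⟨i, Finset.mem_univ i, hbi⟩
  have key : ∀ (n : ℕ) (a : ι → ℕ), (∑ i, a i) ≤ n → δ a = 0 →
      a ∈ AddSubmonoid.closure (hfin.toFinset : Set (ι → ℕ)) := by
    intro n
    induction n with
    | zero =>
      intro a hsum _
      have ha0 : a = 0 := by
        funext i
        show a i = 0
        have := Finset.single_le_sum (fun j (_ : j ∈ Finset.univ) => Nat.zero_le (a j))
          (Finset.mem_univ i)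
        omega
        -- a i ≤ ∑ ≤ 0
      rw [ha0]
      exact zero_mem _
    | succ n ih =>
      intro a hsum ha
      by_cases h0 : a = 0
      · rw [h0]; exact zero_mem _
      · set F : Set (ι → ℕ) := {b | δ b = 0 ∧ b ≠ 0 ∧ b ≤ a} with hF
        obtain ⟨m, hmF, hmin⟩ := wf.has_min F ⟨a, ha, h0, le_refl a⟩
        have hmMin : m ∈ Min := by
          refine ⟨hmF.1, hmF.2.1, fun b hb0 hbne hble => ?_⟩
          by_contra hne
          exact hmin b ⟨hb0, hbne, le_trans hble hmF.2.2⟩ (lt_of_le_of_ne hble hne)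
        have hle : m ≤ a := hmF.2.2
        have hcancel : a - m + m = a := by funext i; exact Nat.sub_add_cancel (hle i)
        have hsub : δ (a - m) = 0 := by
          have h2 := map_add δ (a - m) m
          rw [hcancel, ha, hmF.1, add_zero] at h2
          exact h2.symm
        have hsumlt : (∑ i, (a - m) i) ≤ n := by
          have h1 : (∑ i, (a - m) i) + ∑ i, m i = ∑ i, a i := by
            rw [← Finset.sum_add_distrib]
            exact Finset.sum_congr rfl fun i _ => Nat.sub_add_cancel (hle i)
          have h2 : 1 ≤ ∑ i, m i := by
            obtain ⟨i, hi⟩ := Function.ne_iff.mp hmF.2.1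
            have : m i ≤ ∑ j, m j := Finset.single_le_sum
              (fun j (_ : j ∈ Finset.univ) => Nat.zero_le (m j)) (Finset.mem_univ i)
            have : 1 ≤ m i := Nat.one_le_iff_ne_zero.mpr hi
            omega
          omega
        have := ih (a - m) hsumlt hsub
        have hm : m ∈ AddSubmonoid.closure (hfin.toFinset : Set (ι → ℕ)) :=
          AddSubmonoid.subset_closure (hfin.mem_toFinset.mpr hmMin)
        have := add_mem this hm
        rwa [hcancel] at this
  exact fun a ha => key (∑ i, a i) a le_rfl ha


variable {k R M M' : Type*}

section
variable [Field k] [CommRing R] [Algebra k R]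
    [AddCommGroup M] [DecidableEq M] [AddCommGroup M']
    (𝒜 : M → Submodule k R) [GradedAlgebra 𝒜] (φ : M' →+ M)

lemma gradedPullback_one_mem (m' : M') :
    (1 : AddMonoidAlgebra R M').coeff m' ∈ 𝒜 (φ m') := by
  classical
  rw [AddMonoidAlgebra.one_def, AddMonoidAlgebra.coeff_single]
  by_cases h : (0 : M') = m'
  · subst h
    rw [Finsupp.single_apply, if_pos rfl, map_zero]
    exact SetLike.one_mem_graded 𝒜
  · rw [Finsupp.single_apply, if_neg h]
    exact zero_mem _

/-- The pullback `φ*R = ⊕_{m' ∈ M'} R_{φ(m')}` of an `M`-graded algebra `R`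
along a homomorphism `φ : M' → M`, realized as the subalgebra of the monoid
algebra `R[M']` consisting of those elements whose coefficient at `m'` is
homogeneous of degree `φ(m')`.  Its multiplication is
`(m₁', r₁)·(m₂', r₂) = (m₁' + m₂', r₁r₂)`. -/
def gradedPullback : Subalgebra k (AddMonoidAlgebra R M') where
  carrier := {f | ∀ m' : M', f.coeff m' ∈ 𝒜 (φ m')}
  add_mem' := by
    intro f g hf hg m'
    simpa using add_mem (hf m') (hg m')
  zero_mem' := by
    intro m'
    simp only [AddMonoidAlgebra.coeff_zero, Finsupp.coe_zero, Pi.zero_apply]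
    exact zero_mem _
  mul_mem' := by
    classical
    intro f g hf hg m'
    rw [AddMonoidAlgebra.coeff_mul]
    refine Submodule.sum_mem _ fun a₁ _ => Submodule.sum_mem _ fun a₂ _ => ?_
    by_cases h : a₁ + a₂ = m'
    · have hm := SetLike.mul_mem_graded (hf a₁) (hg a₂)
      rw [← map_add, h] at hm
      simpa [h] using hm
    · simp [h]
  one_mem' := fun m' => gradedPullback_one_mem 𝒜 φ m'
  algebraMap_mem' := by
    intro c m'
    rw [Algebra.algebraMap_eq_smul_one, AddMonoidAlgebra.coeff_smul_apply]
    exact Submodule.smul_mem _ _ (gradedPullback_one_mem 𝒜 φ m')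


/-- The `k`-linear projection of `R` onto its degree-`i` component. -/
noncomputable def projR (i : M) : R →ₗ[k] R where
  toFun r := (DirectSum.decompose 𝒜 r i : R)
  map_add' x y := by
    show ((DirectSum.decompose 𝒜 (x + y) i : R)) = _
    rw [DirectSum.decompose_add, DirectSum.add_apply, Submodule.coe_add]
  map_smul' c x := by
    show ((DirectSum.decompose 𝒜 (c • x) i : R)) = _
    rw [DirectSum.decompose_smul, DirectSum.smul_apply, Submodule.coe_smul, RingHom.id_apply]

lemma projR_apply (i : M) (r : R) : projR 𝒜 i r = (DirectSum.decompose 𝒜 r i : R) := rfl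

lemma projR_mem (i : M) (r : R) : projR 𝒜 i r ∈ 𝒜 i := (DirectSum.decompose 𝒜 r i).2

lemma projR_of_mem_same {i : M} {r : R} (h : r ∈ 𝒜 i) : projR 𝒜 i r = r :=
  DirectSum.decompose_of_mem_same 𝒜 h

lemma projR_of_mem_ne {i j : M} {r : R} (h : r ∈ 𝒜 j) (hij : j ≠ i) : projR 𝒜 i r = 0 :=
  DirectSum.decompose_of_mem_ne 𝒜 h hij

/-- Homogeneity of degree `m` for the `M`-grading on `R[M']` pulled back along `φ`. -/
def PBHom (m : M) (f : AddMonoidAlgebra R M') : Prop := ∀ m' : M', f.coeff m' ∈ 𝒜 (m + φ m')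

lemma pbHom_zero_iff {f : AddMonoidAlgebra R M'} :
    PBHom 𝒜 φ 0 f ↔ f ∈ gradedPullback 𝒜 φ := by
  constructor <;> intro h m' <;> simpa using h m'

lemma pbHom_one : PBHom 𝒜 φ 0 1 := fun m' => by
  simpa using gradedPullback_one_mem 𝒜 φ m'

lemma pbHom_mul {m₁ m₂ : M} {f g : AddMonoidAlgebra R M'}
    (hf : PBHom 𝒜 φ m₁ f) (hg : PBHom 𝒜 φ m₂ g) : PBHom 𝒜 φ (m₁ + m₂) (f * g) := by
  classical
  intro m'
  rw [AddMonoidAlgebra.coeff_mul]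
  refine Submodule.sum_mem _ fun a₁ _ => Submodule.sum_mem _ fun a₂ _ => ?_
  by_cases h : a₁ + a₂ = m'
  · have hm := SetLike.mul_mem_graded (hf a₁) (hg a₂)
    have : m₁ + φ a₁ + (m₂ + φ a₂) = m₁ + m₂ + φ m' := by
      rw [← h, map_add]; abel
    rw [this] at hm
    simpa [h] using hm
  · simp [h]

lemma pbHom_pow {m : M} {f : AddMonoidAlgebra R M'} (hf : PBHom 𝒜 φ m f) (n : ℕ) :
    PBHom 𝒜 φ (n • m) (f ^ n) := by
  induction n with
  | zero => simpa using pbHom_one 𝒜 φ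
  | succ n ih =>
    have := pbHom_mul 𝒜 φ ih hf
    rw [succ_nsmul, pow_succ]
    exact this

/-- The projection of `R[M']` onto its `φ`-pullback-degree-`m` part. -/
noncomputable def pbProj (m : M) : AddMonoidAlgebra R M' →ₗ[k] AddMonoidAlgebra R M' where
  toFun f :=
    haveI := Classical.decEq M'
    haveI := Classical.decEq R
    AddMonoidAlgebra.ofCoeff ⟨f.coeff.support.filter fun m' => projR 𝒜 (m + φ m') (f.coeff m') ≠ 0,
      fun m' => projR 𝒜 (m + φ m') (f.coeff m'), by
      intro m'
      simp only [Finset.mem_filter, Finsupp.mem_support_iff]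
      constructor
      · exact fun h => h.2
      · intro h
        refine ⟨fun h0 : f.coeff m' = 0 => h ?_, h⟩
        rw [h0, map_zero]⟩
  map_add' f g := by
    ext m'
    show projR 𝒜 (m + φ m') ((f + g).coeff m') = _
    rw [AddMonoidAlgebra.coeff_add, Finsupp.add_apply, map_add]
    rfl
  map_smul' c f := by
    ext m'
    show projR 𝒜 (m + φ m') ((c • f).coeff m') = _
    rw [AddMonoidAlgebra.coeff_smul_apply, map_smul]
    rfl

lemma pbProj_apply (m : M) (f : AddMonoidAlgebra R M') (m' : M') :
    (pbProj 𝒜 φ m f).coeff m' = projR 𝒜 (m + φ m') (f.coeff m') := rfl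

lemma pbProj_hom (m : M) (f : AddMonoidAlgebra R M') : PBHom 𝒜 φ m (pbProj 𝒜 φ m f) :=
  fun m' => projR_mem 𝒜 _ _

lemma pbProj_of_hom_same {m : M} {f : AddMonoidAlgebra R M'} (h : PBHom 𝒜 φ m f) :
    pbProj 𝒜 φ m f = f :=
  AddMonoidAlgebra.ext (Finsupp.ext fun m' => projR_of_mem_same 𝒜 (h m'))

lemma pbProj_of_hom_ne {d m : M} {f : AddMonoidAlgebra R M'} (h : PBHom 𝒜 φ d f)
    (hdm : d ≠ m) : pbProj 𝒜 φ m f = 0 :=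
  AddMonoidAlgebra.ext (Finsupp.ext fun m' => projR_of_mem_ne 𝒜 (h m')
    (fun hc => hdm (by have := add_right_cancel hc; exact this)))

/-- Every element of `R[M']` is a finite sum of its homogeneous components. -/
lemma exists_sum_pbProj (f : AddMonoidAlgebra R M') :
    ∃ D : Finset M, f = ∑ m ∈ D, pbProj 𝒜 φ m f := by
  classical
  refine ⟨f.coeff.support.biUnion fun m' =>
    (DirectSum.decompose 𝒜 (f.coeff m')).support.image fun d => d - φ m', ?_⟩
  set D := f.coeff.support.biUnion fun m' =>
    (DirectSum.decompose 𝒜 (f.coeff m')).support.image fun d => d - φ m' with hD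
  ext m'
  rw [AddMonoidAlgebra.coeff_sum, Finset.sum_apply']
  simp only [pbProj_apply]
  by_cases hm' : m' ∈ f.coeff.support
  · have hinj : Set.InjOn (fun m => m + φ m') ↑D := fun a _ b _ h => by
      simpa using add_right_cancel h
    rw [← Finset.sum_image (f := fun i => projR 𝒜 i (f.coeff m')) (fun a ha b hb h => hinj ha hb h)]
    have hsub : (DirectSum.decompose 𝒜 (f.coeff m')).support ⊆ D.image fun m => m + φ m' := by
      intro d hd
      refine Finset.mem_image.mpr ⟨d - φ m', ?_, by abel⟩
      exact Finset.mem_biUnion.mpr ⟨m', hm', Finset.mem_image.mpr ⟨d, hd, rfl⟩⟩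
    rw [← Finset.sum_subset hsub (fun i _ hi => ?_)]
    · rw [eq_comm]
      convert DirectSum.sum_support_decompose 𝒜 (f.coeff m') using 1
      rfl
    · rw [projR_apply]
      rw [DFinsupp.notMem_support_iff.mp hi]
      rfl
  · have h0 : f.coeff m' = 0 := Finsupp.notMem_support_iff.mp hm'
    rw [h0]
    exact (Finset.sum_eq_zero fun m _ => map_zero _).symm

end

section
variable [Field k] [CommRing R] [Algebra k R]
    [AddCommGroup M] [DecidableEq M] [AddCommGroup M']
    (𝒜 : M → Submodule k R) [GradedAlgebra 𝒜] (φ : M' →+ M)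

lemma pbHom_prod_pow {ι : Type*} (x : ι → AddMonoidAlgebra R M') (d : ι → M)
    (hx : ∀ i, PBHom 𝒜 φ (d i) (x i)) (a : ι → ℕ) (s : Finset ι) :
    PBHom 𝒜 φ (∑ i ∈ s, a i • d i) (∏ i ∈ s, x i ^ a i) := by
  classical
  induction s using Finset.induction_on with
  | empty => simpa using pbHom_one 𝒜 φ
  | @insert j s hj ih =>
    rw [Finset.sum_insert hj, Finset.prod_insert hj]
    exact pbHom_mul 𝒜 φ (pbHom_pow 𝒜 φ (hx j) (a j)) ih

end

/-- If `R` is a finitely generated `M`-graded `k`-algebra and `φ : M' → M` is a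
homomorphism of finitely generated abelian groups, then the pullback algebra
`φ*R = ⊕_{m' ∈ M'} R_{φ(m')}` is a finitely generated `k`-algebra. -/
theorem stmt_0 [Field k] [CommRing R] [Algebra k R]
    [AddCommGroup M] [DecidableEq M] [AddCommGroup M']
    (hM : AddGroup.FG M) (hM' : AddGroup.FG M')
    (𝒜 : M → Submodule k R) [GradedAlgebra 𝒜]
    (hR : Algebra.FiniteType k R)
    (φ : M' →+ M) :
    (gradedPullback 𝒜 φ).FG := by
  classical
  haveI : AddMonoid.FG M' := AddGroup.fg_iff_addMonoid_fg.mp hM'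
  have hA : Algebra.FiniteType k (AddMonoidAlgebra R M') :=
    Algebra.FiniteType.trans hR inferInstance
  obtain ⟨s, hs⟩ := hA.out
  choose D hD using exists_sum_pbProj 𝒜 φ
  set s₂ : Finset (AddMonoidAlgebra R M') :=
    s.biUnion fun y => (D y).image fun m => pbProj 𝒜 φ m y with hs₂def
  have hs₂hom : ∀ z ∈ s₂, ∃ m, PBHom 𝒜 φ m z := by
    intro z hz
    obtain ⟨y, _, hy⟩ := Finset.mem_biUnion.mp hz
    obtain ⟨m, _, rfl⟩ := Finset.mem_image.mp hy
    exact ⟨m, pbProj_hom 𝒜 φ m y⟩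
  have hs₂top : Algebra.adjoin k (s₂ : Set (AddMonoidAlgebra R M')) = ⊤ := by
    rw [eq_top_iff, ← hs]
    apply Algebra.adjoin_le
    intro y hy
    show y ∈ Algebra.adjoin k (s₂ : Set (AddMonoidAlgebra R M'))
    rw [hD y]
    refine Subalgebra.sum_mem _ fun m hm => Algebra.subset_adjoin ?_
    exact Finset.mem_biUnion.mpr ⟨y, hy, Finset.mem_image.mpr ⟨m, hm, rfl⟩⟩
  let ι := { z : AddMonoidAlgebra R M' // z ∈ s₂ }
  haveI : Fintype ι := FinsetCoe.fintype s₂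
  choose d hd using fun i : ι => hs₂hom i.1 i.2
  let δ : (ι → ℕ) →+ M :=
    { toFun := fun a => ∑ i, a i • d i
      map_zero' := by simp
      map_add' := by
        intro a b
        simp [add_nsmul, Finset.sum_add_distrib] }
  obtain ⟨T, hT0, hTgen⟩ := exists_finset_ker_gen δ
  set mon : (ι → ℕ) → AddMonoidAlgebra R M' :=
    fun a => ∏ i : ι, (i.1 : AddMonoidAlgebra R M') ^ a i with hmon
  have hmon_hom : ∀ a, PBHom 𝒜 φ (δ a) (mon a) := fun a =>
    pbHom_prod_pow 𝒜 φ _ d hd a Finset.univ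
  have hmon_zero : mon 0 = 1 := by simp [hmon]
  have hmon_add : ∀ a b, mon (a + b) = mon a * mon b := by
    intro a b
    simp only [hmon]
    rw [← Finset.prod_mul_distrib]
    exact Finset.prod_congr rfl fun i _ => by rw [Pi.add_apply, pow_add]
  set Tm : Set (AddMonoidAlgebra R M') := mon '' ↑T with hTm
  have hmonT : ∀ b ∈ AddSubmonoid.closure (T : Set (ι → ℕ)), mon b ∈ Algebra.adjoin k Tm := by
    intro b hb
    refine AddSubmonoid.closure_induction ?_ ?_ ?_ hb
    · exact fun c hc => Algebra.subset_adjoin ⟨c, hc, rfl⟩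
    · rw [hmon_zero]; exact one_mem _
    · intro u v _ _ hu hv
      rw [hmon_add]
      exact mul_mem hu hv
  rw [Subalgebra.fg_def]
  refine ⟨Tm, T.finite_toSet.image mon, le_antisymm ?_ ?_⟩
  · apply Algebra.adjoin_le
    rintro z ⟨a, ha, rfl⟩
    have h0 : δ a = 0 := hT0 a ha
    have := hmon_hom a
    rw [h0] at this
    exact (pbHom_zero_iff 𝒜 φ).mp this
  · intro f hf
    have hf0 : PBHom 𝒜 φ 0 f := (pbHom_zero_iff 𝒜 φ).mpr hf
    have hmem : f ∈ Submodule.span k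
        ((Submonoid.closure (s₂ : Set (AddMonoidAlgebra R M')) : Submonoid _) :
          Set (AddMonoidAlgebra R M')) := by
      have hf1 : f ∈ Algebra.adjoin k (s₂ : Set (AddMonoidAlgebra R M')) := by
        rw [hs₂top]; exact Algebra.mem_top
      rwa [← Subalgebra.mem_toSubmodule, Algebra.adjoin_eq_span] at hf1
    have h1 : pbProj 𝒜 φ 0 f ∈ Submodule.map (pbProj 𝒜 φ 0)
        (Submodule.span k ((Submonoid.closure (s₂ : Set (AddMonoidAlgebra R M')) : Submonoid _) :
          Set (AddMonoidAlgebra R M'))) :=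
      Submodule.mem_map_of_mem hmem
    rw [Submodule.map_span] at h1
    have h2 : (pbProj 𝒜 φ 0) ''
        ((Submonoid.closure (s₂ : Set (AddMonoidAlgebra R M')) : Submonoid _) : Set _) ⊆
        (Subalgebra.toSubmodule (Algebra.adjoin k Tm) : Set (AddMonoidAlgebra R M')) := by
      rintro _ ⟨y, hy, rfl⟩
      have hya : ∃ a, y = mon a := by
        refine Submonoid.closure_induction ?_ ?_ ?_ hy
        · intro z hz
          exact ⟨Pi.single (⟨z, hz⟩ : ι) 1, by
            simp [hmon, Pi.single_apply, pow_ite, Finset.prod_ite_eq', Fintype.prod_ite_eq']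
            convert (Fintype.prod_ite_eq' (⟨z, hz⟩ : ι) (fun x : ι => (x : AddMonoidAlgebra R M'))).symm⟩
        · exact ⟨0, hmon_zero.symm⟩
        · rintro u v _ _ ⟨a, rfl⟩ ⟨b, rfl⟩
          exact ⟨a + b, (hmon_add a b).symm⟩
      obtain ⟨a, rfl⟩ := hya
      by_cases hδ : δ a = 0
      · have heq : pbProj 𝒜 φ 0 (mon a) = mon a :=
          pbProj_of_hom_same 𝒜 φ (hδ ▸ hmon_hom a)
        rw [heq]
        exact hmonT a (hTgen a hδ)
      · have heq : pbProj 𝒜 φ 0 (mon a) = 0 :=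
          pbProj_of_hom_ne 𝒜 φ (hmon_hom a) hδ
        rw [heq]
        exact zero_mem _
    have h3 := Submodule.span_le.mpr h2 h1
    rw [pbProj_of_hom_same 𝒜 φ hf0] at h3
    exact (Subalgebra.mem_toSubmodule _).mp h3
end

section
/- Let $k$ be a field with separable closure $\bar{k}$ and Galois group $\Gamma$, and let $A$ be a $\bar{k}$-algebra with a semilinear continuous $\Gamma$-action (i.e., $g(\lambda a) = g(\lambda) g(a)$ for $\lambda \in \bar{k}$, $a \in A$, and every element has open stabilizer). Then the natural map $A^\Gamma \otimes_k \bar{k} \to A$ is an isomorphism of $\bar{k}$-algebras, where $A^\Gamma$ is the subring of $\Gamma$-invariant elements. -/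
open scoped TensorProduct
open scoped IntermediateField

variable {k K A : Type*} [Field k] [Field K] [Algebra k K]
  [CommRing A] [Algebra K A] [Algebra k A] [IsScalarTower k K A]

/-- The `k`-subalgebra of invariants of a semilinear action
`ρ : Γ → Aut(A)` of the Galois group `Γ = Aut(K/k)` on a `K`-algebra `A`. -/
def galInvariants (ρ : (K ≃ₐ[k] K) →* (A ≃+* A))
    (hsemi : ∀ (g : K ≃ₐ[k] K) (c : K) (a : A), ρ g (c • a) = g c • ρ g a) :
    Subalgebra k A where
  carrier := {a | ∀ g : K ≃ₐ[k] K, ρ g a = a}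
  add_mem' := by
    intro a b ha hb g
    rw [map_add, ha g, hb g]
  mul_mem' := by
    intro a b ha hb g
    rw [map_mul, ha g, hb g]
  one_mem' := fun g => map_one (ρ g)
  algebraMap_mem' := by
    intro c g
    have h1 : algebraMap k A c = algebraMap k K c • (1 : A) := by
      rw [IsScalarTower.algebraMap_apply k K A, Algebra.algebraMap_eq_smul_one]
    rw [h1, hsemi g (algebraMap k K c) 1, map_one, AlgEquiv.commutes]

lemma aux_fixed_scalar [IsSepClosure k K] (x : K) (hx : ∀ g : K ≃ₐ[k] K, g x = x) :
    ∃ c : k, algebraMap k K c = x := by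
  have hint : IsIntegral k x := Algebra.IsIntegral.isIntegral x
  haveI : FiniteDimensional k k⟮x⟯ := IntermediateField.adjoin.finiteDimensional hint
  set L : IntermediateField k K := IntermediateField.normalClosure k k⟮x⟯ K with hLdef
  have hxL : x ∈ L :=
    IntermediateField.le_normalClosure _ (IntermediateField.mem_adjoin_simple_self k x)
  haveI : Algebra.IsSeparable k L := Algebra.isSeparable_tower_bot_of_isSeparable k L K
  haveI : IsGalois k L := ⟨⟩
  have hfix : ∀ σ : L ≃ₐ[k] L, σ ⟨x, hxL⟩ = ⟨x, hxL⟩ := by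
    intro σ
    obtain ⟨g, hg⟩ := AlgEquiv.restrictNormalHom_surjective (K₁ := L) (E := K) σ
    have h2 := AlgEquiv.restrictNormalHom_apply L g ⟨x, hxL⟩
    rw [hg] at h2
    exact Subtype.ext (h2.trans (hx g))
  have h1 : (⟨x, hxL⟩ : L) ∈ IntermediateField.fixedField (⊤ : Subgroup (L ≃ₐ[k] L)) :=
    fun g => hfix g
  rw [← IntermediateField.fixingSubgroup_bot,
    IsGalois.fixedField_fixingSubgroup (⊥ : IntermediateField k L)] at h1
  obtain ⟨c, hc⟩ := IntermediateField.mem_bot.1 h1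
  refine ⟨c, ?_⟩
  rw [IsScalarTower.algebraMap_apply k L K c, hc]
  rfl

lemma aux_li [IsSepClosure k K] (ρ : (K ≃ₐ[k] K) →* (A ≃+* A))
    (hsemi : ∀ (g : K ≃ₐ[k] K) (c : K) (a : A), ρ g (c • a) = g c • ρ g a)
    {ι : Type*} (v : ι → A) (hv : ∀ (i : ι) (g : K ≃ₐ[k] K), ρ g (v i) = v i)
    (hind : LinearIndependent k v) :
    ∀ s : Finset ι, ∀ c : ι → K, (∑ i ∈ s, c i • v i) = 0 → ∀ i ∈ s, c i = 0 := by
  intro s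
  induction s using Finset.strongInduction with
  | _ s IH =>
    classical
    intro c hc i hi
    by_contra hne
    set c' : ι → K := fun j => (c i)⁻¹ * c j with hc'def
    have hrel : ∑ j ∈ s, c' j • v j = 0 := by
      have : ∑ j ∈ s, c' j • v j = (c i)⁻¹ • ∑ j ∈ s, c j • v j := by
        rw [Finset.smul_sum]
        exact Finset.sum_congr rfl fun j _ => by rw [hc'def, mul_smul]
      rw [this, hc, smul_zero]
    have hci' : c' i = 1 := inv_mul_cancel₀ hne
    have hfixed : ∀ j ∈ s, ∀ g : K ≃ₐ[k] K, g (c' j) = c' j := by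
      intro j hj g
      have h2 : ∑ l ∈ s, (g (c' l)) • v l = 0 := by
        have := congrArg (ρ g) hrel
        rw [map_sum, map_zero] at this
        rw [← this]
        exact Finset.sum_congr rfl fun l _ => by rw [hsemi, hv]
      have h2' : ∑ l ∈ s, (g (c' l) - c' l) • v l = 0 := by
        simp only [sub_smul, Finset.sum_sub_distrib, h2, hrel, sub_zero]
      have h3 : ∑ l ∈ s.erase i, (g (c' l) - c' l) • v l = 0 := by
        rw [← Finset.add_sum_erase _ _ hi] at h2'
        simpa [hci'] using h2'
      have h4 := IH (s.erase i) (Finset.erase_ssubset hi) _ h3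
      by_cases hji : j = i
      · subst hji; rw [hci', map_one]
      · have := h4 j (Finset.mem_erase.2 ⟨hji, hj⟩)
        exact sub_eq_zero.1 this
    set d : ι → k := fun j =>
      if h : ∀ g : K ≃ₐ[k] K, g (c' j) = c' j then (aux_fixed_scalar (c' j) h).choose else 0
      with hd_def
    have hd : ∀ j ∈ s, algebraMap k K (d j) = c' j := by
      intro j hj
      rw [hd_def]
      simp only [dif_pos (hfixed j hj)]
      exact (aux_fixed_scalar (c' j) (hfixed j hj)).choose_spec
    have hsum : ∑ j ∈ s, d j • v j = 0 := by
      rw [← hrel]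
      exact Finset.sum_congr rfl fun j hj => by rw [← hd j hj, algebraMap_smul]
    have hd0 : d i = 0 := linearIndependent_iff'.1 hind s d hsum i hi
    have hci0 : c' i = 0 := by rw [← hd i hi, hd0, map_zero]
    rw [hci'] at hci0
    exact one_ne_zero hci0

lemma aux_dual {k L : Type*} [Field k] [Field L] [Algebra k L] [FiniteDimensional k L]
    [IsGalois k L] [DecidableEq (L ≃ₐ[k] L)] {ι : Type*} [Fintype ι] [DecidableEq ι]
    (b : Module.Basis ι k L) (σ : L ≃ₐ[k] L) :
    ∑ i, (Algebra.traceForm k L).dualBasis (traceForm_nondegenerate k L) b i * σ (b i)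
      = if σ = 1 then 1 else 0 := by
  classical
  set db := (Algebra.traceForm k L).dualBasis (traceForm_nondegenerate k L) b with hdb
  set cf : (L ≃ₐ[k] L) → L := fun τ => (∑ i, db i * τ (b i)) - (if τ = 1 then 1 else 0)
    with hcf
  have hpt : ∀ x : L, ∑ τ : L ≃ₐ[k] L, cf τ * τ x = 0 := by
    intro x
    have key : ∑ τ : L ≃ₐ[k] L, (∑ i, db i * τ (b i)) * τ x = x := by
      have h1 : ∀ τ : L ≃ₐ[k] L, (∑ i, db i * τ (b i)) * τ x
          = ∑ i, db i * τ (b i * x) := by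
        intro τ
        rw [Finset.sum_mul]
        exact Finset.sum_congr rfl fun i _ => by rw [map_mul, mul_assoc]
      simp only [h1]
      rw [Finset.sum_comm]
      have h2 : ∀ i, ∑ τ : L ≃ₐ[k] L, db i * τ (b i * x)
          = Algebra.trace k L (x * b i) • db i := by
        intro i
        rw [← Finset.mul_sum, ← trace_eq_sum_automorphisms, Algebra.smul_def, mul_comm,
          mul_comm (b i) x]
      simp only [h2]
      conv_rhs => rw [← db.sum_repr x]
      refine Finset.sum_congr rfl fun i _ => ?_
      congr 1
      rw [hdb, LinearMap.BilinForm.dualBasis_repr_apply]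
      rfl
    have key2 : ∑ τ : L ≃ₐ[k] L, (if τ = 1 then (1:L) else 0) * τ x = x := by
      rw [Finset.sum_eq_single (1 : L ≃ₐ[k] L)]
      · simp
      · intro τ _ hτ; simp [hτ]
      · intro h; exact absurd (Finset.mem_univ _) h
    simp only [hcf, sub_mul, Finset.sum_sub_distrib, key, key2, sub_self]
  have hli : LinearIndependent L (fun (f : L ≃ₐ[k] L) => (f : L → L)) :=
    LinearIndependent.comp (ι' := L ≃ₐ[k] L)
      (linearIndependent_monoidHom L L) (fun f => f)
      (fun x y h => by ext; exact DFunLike.ext_iff.1 h _)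
  have h0 : ∑ τ : L ≃ₐ[k] L, cf τ • (fun x => τ x : L → L) = 0 := by
    funext x
    simpa [Finset.sum_apply, smul_eq_mul] using hpt x
  have := Fintype.linearIndependent_iff.1 hli cf ?_ σ
  · exact sub_eq_zero.1 this
  · exact h0

set_option maxHeartbeats 1000000 in
set_option synthInstance.maxHeartbeats 400000 in
/-- Galois descent for algebras: if `K/k` is a separable closure and `A` is a
`K`-algebra with a semilinear continuous action of `Γ = Gal(K/k)`, then the
natural map `A^Γ ⊗_k K → A`, `a ⊗ λ ↦ λ • a`, is an isomorphism. -/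
theorem stmt_12 [IsSepClosure k K]
    (ρ : (K ≃ₐ[k] K) →* (A ≃+* A))
    (hsemi : ∀ (g : K ≃ₐ[k] K) (c : K) (a : A), ρ g (c • a) = g c • ρ g a)
    (hcont : ∀ a : A, ∃ k' : IntermediateField k K, FiniteDimensional k k' ∧
      ∀ g : K ≃ₐ[k] K, (∀ x ∈ k', g x = x) → ρ g a = a) :
    Function.Bijective
      (Algebra.TensorProduct.productMap
        (galInvariants ρ hsemi).val (IsScalarTower.toAlgHom k K A)) := by
  classical
  set V := galInvariants ρ hsemi with hV
  set Φ := Algebra.TensorProduct.productMap V.val (IsScalarTower.toAlgHom k K A) with hΦ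
  constructor
  · -- Injectivity
    rw [injective_iff_map_eq_zero]
    intro x hx0
    set b := Module.Basis.ofVectorSpace k V with hb
    set ψ : K ⊗[k] V →ₐ[K] A :=
      Algebra.TensorProduct.lift (Algebra.ofId K A) V.val
        (fun x y => mul_comm _ _) with hψ
    have hψΦ : ∀ z : V ⊗[k] K, ψ (TensorProduct.comm k V K z) = Φ z := by
      intro z
      induction z using TensorProduct.induction_on with
      | zero => simp
      | tmul m lam =>
          simp [hψ, hΦ, Algebra.TensorProduct.lift_tmul,
            Algebra.TensorProduct.productMap_apply_tmul, Algebra.ofId_apply, mul_comm]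
          erw [Algebra.TensorProduct.lift_tmul]
          simp [Algebra.ofId_apply, mul_comm]
      | add u w hu hw => simp only [map_add, hu, hw]
    set y := TensorProduct.comm k V K x with hy
    set B := b.baseChange K with hB
    set r := B.repr y with hr
    have hyr : y = ∑ i ∈ r.support, r i • B i := by
      conv_lhs => rw [← B.linearCombination_repr y]
      rw [Finsupp.linearCombination_apply, Finsupp.sum]
    have h0 : ∑ i ∈ r.support, r i • ((b i : V) : A) = 0 := by
      have h1 : ψ y = 0 := by rw [hψΦ x, hx0]
      rw [hyr, map_sum] at h1
      rw [← h1]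
      refine Finset.sum_congr rfl fun i _ => ?_
      rw [map_smul]
      congr 1
      rw [hB, Module.Basis.baseChange_apply]
      simp [hψ, Algebra.TensorProduct.lift_tmul, Algebra.ofId_apply]
      erw [Algebra.TensorProduct.lift_tmul]
      simp
    have hv : ∀ (i : _) (g : K ≃ₐ[k] K), ρ g ((b i : V) : A) = ((b i : V) : A) :=
      fun i g => (b i).2 g
    have hind : LinearIndependent k (fun i => ((b i : V) : A)) := by
      have h2 := (Module.Basis.ofVectorSpace k V).linearIndependent
      exact h2.map' V.val.toLinearMap (LinearMap.ker_eq_bot.2 Subtype.val_injective)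
    have hz := aux_li ρ hsemi _ hv hind r.support (fun i => r i) h0
    have hr0 : r = 0 := by
      ext i
      by_cases h : i ∈ r.support
      · exact hz i h
      · exact Finsupp.notMem_support_iff.1 h
    have hy0 : y = 0 := by rw [hyr, hr0]; simp
    have := congrArg (TensorProduct.comm k V K).symm hy0
    rwa [hy, LinearEquiv.symm_apply_apply, map_zero] at this
  · -- Surjectivity
    intro a
    obtain ⟨k', hfd, hfixa⟩ := hcont a
    haveI := hfd
    set L : IntermediateField k K := IntermediateField.normalClosure k k' K with hLdef
    haveI : Algebra.IsSeparable k L := Algebra.isSeparable_tower_bot_of_isSeparable k L K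
    haveI : IsGalois k L := ⟨⟩
    have hk'L : k' ≤ L := IntermediateField.le_normalClosure k'
    set π : (K ≃ₐ[k] K) →* (L ≃ₐ[k] L) := AlgEquiv.restrictNormalHom L with hπ
    have hsurj : Function.Surjective π :=
      AlgEquiv.restrictNormalHom_surjective (F := k) (K₁ := L) (E := K)
    set s : (L ≃ₐ[k] L) → (K ≃ₐ[k] K) := Function.surjInv hsurj with hs_def
    have hs : ∀ σ, π (s σ) = σ := fun σ => Function.surjInv_eq hsurj σ
    have hres : ∀ (g : K ≃ₐ[k] K) (x : L), g (x : K) = ((π g x : L) : K) :=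
      fun g x => (AlgEquiv.restrictNormalHom_apply L g x).symm
    have keyfact : ∀ g g' : K ≃ₐ[k] K, π g = π g' → ρ g a = ρ g' a := by
      intro g g' h
      have h1 : ρ (g'⁻¹ * g) a = a := by
        apply hfixa
        intro x hx
        have hxL : x ∈ L := hk'L hx
        have h2 : (g'⁻¹ * g) x = g'⁻¹ (g x) := rfl
        rw [h2, hres g ⟨x, hxL⟩, h, ← hres g' ⟨x, hxL⟩]
        show (g'⁻¹ * g') x = x
        rw [inv_mul_cancel]
        rfl
      calc ρ g a = ρ (g' * (g'⁻¹ * g)) a := by rw [mul_inv_cancel_left]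
        _ = ρ g' (ρ (g'⁻¹ * g) a) := by rw [map_mul]; rfl
        _ = ρ g' a := by rw [h1]
    set F : (L ≃ₐ[k] L) → A := fun σ => ρ (s σ) a with hF
    have hFequiv : ∀ (g : K ≃ₐ[k] K) σ, ρ g (F σ) = F (π g * σ) := by
      intro g σ
      have h2 : ρ g (ρ (s σ) a) = ρ (g * s σ) a := by rw [map_mul]; rfl
      rw [hF]
      dsimp only
      rw [h2, keyfact (g * s σ) (s (π g * σ)) (by rw [map_mul, hs, hs])]
    set bb := Module.finBasis k L with hbb
    set db := (Algebra.traceForm k L).dualBasis (traceForm_nondegenerate k L) bb with hdbdef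
    set T : L → A := fun μ => ∑ σ : L ≃ₐ[k] L, ((σ μ : L) : K) • F σ with hT
    have hTinv : ∀ μ : L, T μ ∈ galInvariants ρ hsemi := by
      intro μ g
      show ρ g (T μ) = T μ
      rw [hT]
      dsimp only
      rw [map_sum]
      have h1 : ∀ σ : L ≃ₐ[k] L, ρ g (((σ μ : L) : K) • F σ)
          = (((π g * σ) μ : L) : K) • F (π g * σ) := by
        intro σ
        rw [hsemi, hFequiv, hres g (σ μ)]
        rfl
      simp only [h1]
      exact Fintype.sum_equiv (Equiv.mulLeft (π g))
        (fun σ => (((π g * σ) μ : L) : K) • F (π g * σ))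
        (fun τ => ((τ μ : L) : K) • F τ) (fun σ => rfl)
    have hF1 : F 1 = a := by
      rw [hF]
      dsimp only
      rw [keyfact (s 1) 1 (by rw [hs, map_one]), map_one]
      rfl
    have hmain : ∑ i, ((db i : K)) • T (bb i) = a := by
      have step1 : ∀ i, (db i : K) • T (bb i)
          = ∑ σ : L ≃ₐ[k] L, (((db i * σ (bb i) : L)) : K) • F σ := by
        intro i
        rw [hT]
        dsimp only
        rw [Finset.smul_sum]
        refine Finset.sum_congr rfl fun σ _ => ?_
        rw [smul_smul]
        norm_cast
      simp only [step1]
      rw [Finset.sum_comm]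
      have step2 : ∀ σ : L ≃ₐ[k] L, ∑ i, ((db i * σ (bb i) : L) : K) • F σ
          = (((if σ = 1 then (1:L) else 0) : L) : K) • F σ := by
        intro σ
        rw [← Finset.sum_smul]
        congr 1
        have h8 := aux_dual (k := k) (L := ↥L) bb σ
        rw [← hdbdef] at h8
        rw [← h8]
        norm_cast
      simp only [step2]
      rw [Finset.sum_eq_single (1 : L ≃ₐ[k] L)]
      · rw [if_pos rfl, hF1]
        norm_num
      · intro τ _ hτ
        rw [if_neg hτ]
        norm_num
      · intro h; exact absurd (Finset.mem_univ _) h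
    refine ⟨∑ i, (⟨T (bb i), hTinv (bb i)⟩ : V) ⊗ₜ[k] ((db i : K)), ?_⟩
    rw [map_sum, ← hmain]
    refine Finset.sum_congr rfl fun i _ => ?_
    rw [hΦ, Algebra.TensorProduct.productMap_apply_tmul]
    rw [Algebra.smul_def, mul_comm]
    rfl
end
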